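/- Let m ≥ 1 and n = 2m. Define γ_i := A_m(i−1) − A_m(i) for i = 1,…,n, and let T be the n×n symmetric Toeplitz matrix with entries T[i,j] = γ_{n−|i−j|}. Then each γ_i ≥ 0 and the spectral norm (largest singular value) of T equals 1. -/

import Mathlib

open Finset

/-- central binomial convolution -/
theorem cb_conv (n : ℕ) :
    ∑ k ∈ range (n + 1), Nat.centralBinom k * Nat.centralBinom (n - k) = 4 ^ n := by
  induction n with
  | zero => simp [Nat.centralBinom]
  | succ n ih =>
      set c := Nat.centralBinom with hc
      have refl1 : ∀ N : ℕ, ∀ g : ℕ → ℕ,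
          ∑ k ∈ range (N + 1), g k * (c k * c (N - k))
            = ∑ k ∈ range (N + 1), g (N - k) * (c k * c (N - k)) := by
        intro N g
        rw [← Finset.sum_range_reflect (fun k => g (N - k) * (c k * c (N - k))) (N + 1)]
        apply Finset.sum_congr rfl
        intro k hk
        rw [Finset.mem_range] at hk
        have h1 : N + 1 - 1 - k = N - k := by omega
        have h2 : N - (N - k) = k := by omega
        rw [h1, h2, mul_comm (c (N - k)) (c k)]
      -- (n+1) * S(n+1) = 2 * ∑ k * c k * c (n+1-k)
      have step1 : (n + 1) * ∑ k ∈ range (n + 2), c k * c (n + 1 - k)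
          = 2 * ∑ k ∈ range (n + 2), k * (c k * c (n + 1 - k)) := by
        have h := refl1 (n + 1) (fun k => k)
        calc (n + 1) * ∑ k ∈ range (n + 2), c k * c (n + 1 - k)
            = ∑ k ∈ range (n + 2), (n + 1) * (c k * c (n + 1 - k)) := Finset.mul_sum _ _ _
          _ = ∑ k ∈ range (n + 2), (k * (c k * c (n + 1 - k))
                + (n + 1 - k) * (c k * c (n + 1 - k))) := by
              apply Finset.sum_congr rfl
              intro k hk
              rw [Finset.mem_range] at hk
              set d := n + 1 - k with hd
              have hkn : k + d = n + 1 := by omega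
              rw [← hkn]; ring
          _ = ∑ k ∈ range (n + 2), k * (c k * c (n + 1 - k))
                + ∑ k ∈ range (n + 2), (n + 1 - k) * (c k * c (n + 1 - k)) :=
              Finset.sum_add_distrib
          _ = 2 * ∑ k ∈ range (n + 2), k * (c k * c (n + 1 - k)) := by
              rw [← h]; ring
      -- drop k = 0 and shift
      have step2 : ∑ k ∈ range (n + 2), k * (c k * c (n + 1 - k))
          = ∑ k ∈ range (n + 1), (k + 1) * (c (k + 1) * c (n - k)) := by
        rw [Finset.sum_range_succ' (fun k => k * (c k * c (n + 1 - k))) (n + 1)]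
        simp
      have step3 : ∀ k : ℕ, (k + 1) * (c (k + 1) * c (n - k))
          = 2 * (2 * k + 1) * (c k * c (n - k)) := by
        intro k
        have := Nat.succ_mul_centralBinom_succ k
        rw [hc]
        nlinarith [this]
      have step4 : ∑ k ∈ range (n + 1), (2 * k) * (c k * c (n - k))
            + ∑ k ∈ range (n + 1), (2 * (n - k)) * (c k * c (n - k))
          = ∑ k ∈ range (n + 1), (2 * n) * (c k * c (n - k)) := by
        rw [← Finset.sum_add_distrib]
        apply Finset.sum_congr rfl
        intro k hk
        rw [Finset.mem_range] at hk
        set d := n - k with hd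
        have hkn : k + d = n := by omega
        rw [← hkn]; ring
      have key : (n + 1) * ∑ k ∈ range (n + 2), c k * c (n + 1 - k)
          = (n + 1) * 4 ^ (n + 1) := by
        rw [step1, step2]
        calc 2 * ∑ k ∈ range (n + 1), (k + 1) * (c (k + 1) * c (n - k))
            = 2 * ∑ k ∈ range (n + 1), 2 * (2 * k + 1) * (c k * c (n - k)) := by
              rw [Finset.sum_congr rfl (fun k _ => step3 k)]
          _ = 2 * ∑ k ∈ range (n + 1), ((2 * k) * (c k * c (n - k))
                + (2 * k) * (c k * c (n - k)) + 2 * (c k * c (n - k))) := by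
              congr 1; apply Finset.sum_congr rfl; intro k _; ring
          _ = 2 * (∑ k ∈ range (n + 1), (2 * k) * (c k * c (n - k))
                + ∑ k ∈ range (n + 1), (2 * k) * (c k * c (n - k))
                + ∑ k ∈ range (n + 1), 2 * (c k * c (n - k))) := by
              rw [Finset.sum_add_distrib, Finset.sum_add_distrib]
          _ = 2 * (∑ k ∈ range (n + 1), (2 * k) * (c k * c (n - k))
                + ∑ k ∈ range (n + 1), (2 * (n - k)) * (c k * c (n - k))
                + ∑ k ∈ range (n + 1), 2 * (c k * c (n - k))) := by
              congr 3
              have := refl1 n (fun k => 2 * k)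
              simpa using this
          _ = 2 * (∑ k ∈ range (n + 1), (2 * n) * (c k * c (n - k))
                + ∑ k ∈ range (n + 1), 2 * (c k * c (n - k))) := by rw [step4]
          _ = (4 * n + 4) * ∑ k ∈ range (n + 1), c k * c (n - k) := by
              rw [← Finset.mul_sum, ← Finset.mul_sum]; ring
          _ = (4 * n + 4) * 4 ^ n := by rw [ih]
          _ = (n + 1) * 4 ^ (n + 1) := by ring
      exact Nat.eq_of_mul_eq_mul_left (by omega) key

/-- `ξ i = C(2i, i) / 4^i`. -/
noncomputable def xi (i : ℕ) : ℝ := (Nat.choose (2 * i) i : ℝ) / 4 ^ i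

/-- `A_m(j) = ∑_{i=0}^{m−j−1} ξ_i ξ_{i+j}` (which is `0` when `j ≥ m`). -/
noncomputable def Am (m j : ℕ) : ℝ := ∑ i ∈ Finset.range (m - j), xi i * xi (i + j)

lemma xi_eq (i : ℕ) : xi i = (Nat.centralBinom i : ℝ) / 4 ^ i := rfl

lemma xi_pos (i : ℕ) : 0 < xi i := by
  rw [xi_eq]
  apply div_pos _ (by positivity)
  exact_mod_cast Nat.centralBinom_pos i

lemma xi_antitone (i : ℕ) : xi (i + 1) ≤ xi i := by
  have h := Nat.succ_mul_centralBinom_succ i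
  have hle : Nat.centralBinom (i + 1) ≤ 4 * Nat.centralBinom i := by
    have : (i + 1) * Nat.centralBinom (i + 1) ≤ (i + 1) * (4 * Nat.centralBinom i) := by
      rw [h]; nlinarith [Nat.centralBinom_pos i]
    exact Nat.le_of_mul_le_mul_left this (by omega)
  rw [xi_eq, xi_eq, div_le_div_iff₀ (by positivity) (by positivity)]
  have : ((Nat.centralBinom (i + 1) : ℝ)) ≤ 4 * Nat.centralBinom i := by
    exact_mod_cast hle
  calc (Nat.centralBinom (i + 1) : ℝ) * 4 ^ i ≤ (4 * Nat.centralBinom i) * 4 ^ i := by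
        apply mul_le_mul_of_nonneg_right this (by positivity)
    _ = (Nat.centralBinom i : ℝ) * 4 ^ (i + 1) := by ring

lemma xi_le_of_le {i j : ℕ} (h : i ≤ j) : xi j ≤ xi i := by
  induction j with
  | zero => simp_all
  | succ k ih =>
      rcases Nat.lt_or_ge i (k + 1) with h' | h'
      · exact le_trans (xi_antitone k) (ih (by omega))
      · have : i = k + 1 := by omega
        simp [this]

lemma xi_conv (u : ℕ) : ∑ k ∈ Finset.range (u + 1), xi k * xi (u - k) = 1 := by
  have h := cb_conv u
  have h4 : (0:ℝ) < 4 ^ u := by positivity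
  have hpt : ∀ k ∈ Finset.range (u + 1), xi k * xi (u - k)
      = ((Nat.centralBinom k * Nat.centralBinom (u - k) : ℕ) : ℝ) / 4 ^ u := by
    intro k hk
    rw [Finset.mem_range] at hk
    rw [xi_eq, xi_eq]
    push_cast
    rw [div_mul_div_comm, ← pow_add]
    congr 2
    omega
  rw [Finset.sum_congr rfl hpt, ← Finset.sum_div, ← Nat.cast_sum, h]
  rw [div_eq_one_iff_eq (ne_of_gt h4)]
  push_cast
  ring

lemma Am_zero {m j : ℕ} (h : m ≤ j) : Am m j = 0 := by
  unfold Am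
  rw [Nat.sub_eq_zero_of_le h]
  simp

lemma Am_antitone (m j : ℕ) : Am m (j + 1) ≤ Am m j := by
  unfold Am
  have hsub : m - (j + 1) ≤ m - j := by omega
  calc ∑ i ∈ Finset.range (m - (j + 1)), xi i * xi (i + (j + 1))
      ≤ ∑ i ∈ Finset.range (m - (j + 1)), xi i * xi (i + j) := by
        apply Finset.sum_le_sum
        intro i _
        exact mul_le_mul_of_nonneg_left (xi_le_of_le (by omega)) (le_of_lt (xi_pos i))
    _ ≤ ∑ i ∈ Finset.range (m - j), xi i * xi (i + j) := by
        apply Finset.sum_le_sum_of_subset_of_nonneg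
        · exact Finset.range_subset_range.2 hsub
        · intro i _ _
          exact le_of_lt (mul_pos (xi_pos i) (xi_pos _))

lemma Am_le_of_le (m : ℕ) {i j : ℕ} (h : i ≤ j) : Am m j ≤ Am m i := by
  induction j with
  | zero => simp_all
  | succ k ih =>
      rcases Nat.lt_or_ge i (k + 1) with h' | h'
      · exact le_trans (Am_antitone m k) (ih (by omega))
      · have : i = k + 1 := by omega
        simp [this]

/-- triangle reindexing -/
lemma triangle_sum (N : ℕ) (f : ℕ → ℕ → ℝ) :
    ∑ k ∈ Finset.range N, ∑ s ∈ Finset.range (N - k), f k s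
      = ∑ u ∈ Finset.range N, ∑ k ∈ Finset.range (u + 1), f k (u - k) := by
  induction N with
  | zero => simp
  | succ N ih =>
      rw [Finset.sum_range_succ (fun u => ∑ k ∈ Finset.range (u + 1), f k (u - k)) N, ← ih]
      rw [Finset.sum_range_succ (fun k => ∑ s ∈ Finset.range (N + 1 - k), f k s) N]
      have hsplit : ∀ k ∈ Finset.range N,
          ∑ s ∈ Finset.range (N + 1 - k), f k s
            = ∑ s ∈ Finset.range (N - k), f k s + f k (N - k) := by
        intro k hk
        rw [Finset.mem_range] at hk
        have : N + 1 - k = (N - k) + 1 := by omega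
        rw [this, Finset.sum_range_succ]
      rw [Finset.sum_congr rfl hsplit, Finset.sum_add_distrib]
      have : ∑ k ∈ Finset.range (N + 1), f k (N - k)
          = ∑ k ∈ Finset.range N, f k (N - k) + f N (N - N) := Finset.sum_range_succ _ _
      simp only [Nat.sub_self] at this
      simp only [Nat.add_sub_cancel_left, Nat.sub_self]
      rw [this]
      simp [Finset.sum_range_one]
      ring

lemma P_eq (m j : ℕ) :
    ∑ k ∈ Finset.range m, xi k * Am m (j + k)
      = ∑ u ∈ Finset.range (m - j), xi (u + j) := by
  have hzero : ∀ k ∈ Finset.range m, k ∉ Finset.range (m - j) → xi k * Am m (j + k) = 0 := by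
    intro k _ hk
    rw [Finset.mem_range, not_lt] at hk
    rw [Am_zero (by omega), mul_zero]
  rw [← Finset.sum_subset (Finset.range_subset_range.2 (Nat.sub_le m j)) hzero]
  have expand : ∀ k ∈ Finset.range (m - j),
      xi k * Am m (j + k) = ∑ s ∈ Finset.range (m - j - k), xi k * (xi s * xi (s + (j + k))) := by
    intro k hk
    unfold Am
    rw [Finset.mul_sum]
    have : m - (j + k) = m - j - k := by omega
    rw [this]
  rw [Finset.sum_congr rfl expand,
    triangle_sum (m - j) (fun k s => xi k * (xi s * xi (s + (j + k))))]
  apply Finset.sum_congr rfl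
  intro u hu
  have inner : ∀ k ∈ Finset.range (u + 1),
      xi k * (xi (u - k) * xi ((u - k) + (j + k))) = xi k * xi (u - k) * xi (u + j) := by
    intro k hk
    rw [Finset.mem_range] at hk
    have : (u - k) + (j + k) = u + j := by omega
    rw [this]; ring
  rw [Finset.sum_congr rfl inner, ← Finset.sum_mul, xi_conv, one_mul]

/-- the key eigen identity -/
lemma star_eq {m i : ℕ} (hi : i < m) :
    ∑ k ∈ Finset.range m, (Am m (i + k) - Am m (i + k + 1)) * xi k = xi i := by
  have hsum : ∑ k ∈ Finset.range m, (Am m (i + k) - Am m (i + k + 1)) * xi k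
      = ∑ k ∈ Finset.range m, xi k * Am m (i + k)
        - ∑ k ∈ Finset.range m, xi k * Am m ((i + 1) + k) := by
    rw [← Finset.sum_sub_distrib]
    apply Finset.sum_congr rfl
    intro k _
    have : i + 1 + k = i + k + 1 := by omega
    rw [this]; ring
  rw [hsum, P_eq, P_eq]
  have h1 : m - i = (m - (i + 1)) + 1 := by omega
  rw [h1, Finset.sum_range_succ' (fun u => xi (u + i)) (m - (i + 1))]
  simp only [zero_add]
  have : ∀ u ∈ Finset.range (m - (i + 1)), xi (u + 1 + i) = xi (u + (i + 1)) := by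
    intro u _
    congr 1
    omega
  rw [Finset.sum_congr rfl this]
  ring

open Matrix in
/-- A symmetric entrywise-nonnegative matrix with a positive eigenvector of eigenvalue 1
has operator norm 1. -/
lemma opNorm_eq_one_of_pos_eigenvector {n : ℕ} (hn : 0 < n) (M : Matrix (Fin n) (Fin n) ℝ)
    (hnn : ∀ p q, 0 ≤ M p q) (hsym : ∀ p q, M p q = M q p)
    (v : Fin n → ℝ) (hv : ∀ p, 0 < v p) (heig : M.mulVec v = v) :
    ‖Matrix.toEuclideanCLM (𝕜 := ℝ) M‖ = 1 := by
  set f := Matrix.toEuclideanCLM (𝕜 := ℝ) M with hf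
  have hfx : ∀ (x : EuclideanSpace ℝ (Fin n)) (i : Fin n),
      (f x) i = M.mulVec (fun j => x j) i := fun x i => rfl
  -- row sums against v, and column sums against v
  have hrow : ∀ p, ∑ q, M p q * v q = v p := by
    intro p
    have := congrFun heig p
    simpa [Matrix.mulVec, dotProduct] using this
  have hcol : ∀ q, ∑ p, M p q * v p = v q := by
    intro q
    rw [← hrow q]
    exact Finset.sum_congr rfl fun p _ => by rw [hsym]
  -- the key quadratic bound
  have hquad : ∀ u : Fin n → ℝ, ∑ p, (M.mulVec u p) ^ 2 ≤ ∑ p, (u p) ^ 2 := by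
    intro u
    have hp_bound : ∀ p, (M.mulVec u p) ^ 2 ≤ v p * ∑ q, (M p q / v q) * (u q) ^ 2 := by
      intro p
      have hcs := Finset.sum_mul_sq_le_sq_mul_sq Finset.univ
        (fun q => Real.sqrt (M p q * v q))
        (fun q => Real.sqrt (M p q / v q) * u q)
      have h1 : ∀ q, Real.sqrt (M p q * v q) * (Real.sqrt (M p q / v q) * u q)
          = M p q * u q := by
        intro q
        rw [← mul_assoc, ← Real.sqrt_mul (mul_nonneg (hnn p q) (hv q).le)]
        have hvq := (hv q).ne'
        have : M p q * v q * (M p q / v q) = (M p q) ^ 2 := by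
          field_simp
        rw [this, Real.sqrt_sq (hnn p q)]
      have h2 : ∀ q, Real.sqrt (M p q * v q) ^ 2 = M p q * v q := by
        intro q
        exact Real.sq_sqrt (mul_nonneg (hnn p q) (hv q).le)
      have h3 : ∀ q, (Real.sqrt (M p q / v q) * u q) ^ 2 = (M p q / v q) * (u q) ^ 2 := by
        intro q
        rw [mul_pow, Real.sq_sqrt (div_nonneg (hnn p q) (hv q).le)]
      simp only [h1, h2, h3] at hcs
      have hmv : M.mulVec u p = ∑ q, M p q * u q := by
        simp [Matrix.mulVec, dotProduct]
      rw [hrow p] at hcs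
      rw [hmv]
      exact hcs
    calc ∑ p, (M.mulVec u p) ^ 2
        ≤ ∑ p, v p * ∑ q, (M p q / v q) * (u q) ^ 2 :=
          Finset.sum_le_sum fun p _ => hp_bound p
      _ = ∑ p, ∑ q, (M p q * v p) * ((u q) ^ 2 / v q) := by
          apply Finset.sum_congr rfl
          intro p _
          rw [Finset.mul_sum]
          apply Finset.sum_congr rfl
          intro q _
          have hvq := (hv q).ne'
          field_simp
      _ = ∑ q, ∑ p, (M p q * v p) * ((u q) ^ 2 / v q) := Finset.sum_comm
      _ = ∑ q, (∑ p, M p q * v p) * ((u q) ^ 2 / v q) := by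
          apply Finset.sum_congr rfl
          intro q _
          rw [Finset.sum_mul]
      _ = ∑ q, (u q) ^ 2 := by
          apply Finset.sum_congr rfl
          intro q _
          rw [hcol q]
          have hvq := (hv q).ne'
          field_simp
  -- norms on EuclideanSpace
  have hnorm : ∀ x : EuclideanSpace ℝ (Fin n), ‖x‖ = Real.sqrt (∑ i, (x i) ^ 2) := by
    intro x
    rw [EuclideanSpace.norm_eq]
    congr 1
    exact Finset.sum_congr rfl fun i _ => by rw [Real.norm_eq_abs, sq_abs]
  have hub : ‖f‖ ≤ 1 := by
    apply ContinuousLinearMap.opNorm_le_bound _ zero_le_one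
    intro x
    rw [one_mul, hnorm, hnorm]
    apply Real.sqrt_le_sqrt
    calc ∑ i, ((f x) i) ^ 2 = ∑ i, (M.mulVec (fun j => x j) i) ^ 2 := by
          exact Finset.sum_congr rfl fun i _ => by rw [hfx]
      _ ≤ ∑ i, (x i) ^ 2 := hquad _
  -- lower bound via eigenvector
  set vE : EuclideanSpace ℝ (Fin n) := (WithLp.equiv 2 (Fin n → ℝ)).symm v with hvE
  have hfv : f vE = vE := by
    apply PiLp.ext -- as PiLp functions
    intro i
    rw [hfx]
    have : (fun j => vE j) = v := rfl
    rw [this, heig]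
    rfl
  have hvE_pos : 0 < ‖vE‖ := by
    rw [hnorm]
    apply Real.sqrt_pos.2
    apply Finset.sum_pos
    · intro i _
      have : vE i = v i := rfl
      rw [this]
      exact pow_pos (hv i) 2
    · exact ⟨⟨0, hn⟩, Finset.mem_univ _⟩
  have hlb : 1 ≤ ‖f‖ := by
    have := ContinuousLinearMap.le_opNorm f vE
    rw [hfv] at this
    nlinarith [hvE_pos]
  linarith

/-- `toeplitz n γ` is the `n×n` symmetric Toeplitz matrix `Toeplitz(γ_n, …, γ_1)` whose
`(i,j)` entry (for `1 ≤ i, j ≤ n`) is `γ_{n − |i−j|}`. -/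
def toeplitz (n : ℕ) (γ : ℕ → ℝ) : Matrix (Fin n) (Fin n) ℝ :=
  Matrix.of fun i j => γ (n - (max (i : ℕ) (j : ℕ) - min (i : ℕ) (j : ℕ)))

/-- The spectral norm (largest singular value) of a real matrix, as the operator norm
of its action on Euclidean space. -/
noncomputable def sNorm {n : ℕ} (M : Matrix (Fin n) (Fin n) ℝ) : ℝ :=
  ‖Matrix.toEuclideanCLM (𝕜 := ℝ) M‖

/-- Let `m ≥ 1`, `n = 2m`, and `γ_i = A_m(i−1) − A_m(i)` for `i = 1, …, n`.  Then each
`γ_i ≥ 0`, and the spectral norm of the `n×n` symmetric Toeplitz matrix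
`Toeplitz(γ_n, …, γ_1)` equals `1`. -/
theorem even_toeplitz_norm (m : ℕ) (hm : 1 ≤ m) :
    let n := 2 * m
    let γ : ℕ → ℝ := fun i => Am m (i - 1) - Am m i
    (∀ i, 1 ≤ i → i ≤ n → 0 ≤ γ i) ∧ sNorm (toeplitz n γ) = 1 := by
  intro n γ
  have hn2 : n = 2 * m := rfl
  have hn : 0 < n := by omega
  have hγ_nonneg : ∀ t : ℕ, 0 ≤ γ t := by
    intro t
    show 0 ≤ Am m (t - 1) - Am m t
    have := Am_le_of_le m (Nat.sub_le t 1)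
    linarith
  have hγ_zero : ∀ t : ℕ, m + 1 ≤ t → γ t = 0 := by
    intro t ht
    show Am m (t - 1) - Am m t = 0
    rw [Am_zero (by omega), Am_zero (by omega)]
    ring
  have hγ_star : ∀ i, i < m → ∑ k ∈ Finset.range m, γ (i + k + 1) * xi k = xi i := by
    intro i hi
    have hst := star_eq (m := m) (i := i) hi
    rw [← hst]
    apply Finset.sum_congr rfl
    intro k _
    show (Am m (i + k + 1 - 1) - Am m (i + k + 1)) * xi k = _
    norm_num
  refine ⟨fun i _ _ => hγ_nonneg i, ?_⟩
  set v : Fin n → ℝ := fun p => if (p : ℕ) < m then xi p else xi (n - 1 - p) with hvdef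
  have hv : ∀ p, 0 < v p := by
    intro p
    simp only [hvdef]
    split <;> exact xi_pos _
  have hnnM : ∀ p q : Fin n, 0 ≤ toeplitz n γ p q := fun p q => hγ_nonneg _
  have hsymM : ∀ p q : Fin n, toeplitz n γ p q = toeplitz n γ q p := by
    intro p q
    show γ (n - (max (p : ℕ) q - min (p : ℕ) q)) = γ (n - (max (q : ℕ) p - min (q : ℕ) p))
    rw [max_comm, min_comm]
  have heig : (toeplitz n γ).mulVec v = v := by
    funext p
    have hmv : (toeplitz n γ).mulVec v p
        = ∑ q ∈ Finset.range n, (fun q : ℕ =>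
            γ (n - (max (p : ℕ) q - min (p : ℕ) q))
              * (if q < m then xi q else xi (n - 1 - q))) q := by
      rw [← Fin.sum_univ_eq_sum_range]
      rfl
    set g : ℕ → ℝ := fun q =>
      γ (n - (max (p : ℕ) q - min (p : ℕ) q)) * (if q < m then xi q else xi (n - 1 - q))
      with hgdef
    rw [hmv]
    have hsplit : ∑ q ∈ Finset.range n, g q
        = ∑ q ∈ Finset.range m, g q + ∑ l ∈ Finset.range m, g (m + l) := by
      rw [hn2, two_mul]
      exact Finset.sum_range_add g m m
    rw [hsplit]
    have hp2 : (p : ℕ) < n := p.2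
    rcases Nat.lt_or_ge (p : ℕ) m with hp | hp
    · -- first block: zero
      have hz : ∀ q ∈ Finset.range m, g q = 0 := by
        intro q hq
        rw [Finset.mem_range] at hq
        simp only [hgdef]
        rw [hγ_zero _ (by omega), zero_mul]
      rw [Finset.sum_eq_zero hz, zero_add]
      have hterm : ∀ l ∈ Finset.range m, g (m + l)
          = γ (m + (p : ℕ) - l) * xi (m - 1 - l) := by
        intro l hl
        rw [Finset.mem_range] at hl
        simp only [hgdef]
        have h1 : ¬ (m + l < m) := by omega
        rw [if_neg h1]
        have h2 : n - (max (p : ℕ) (m + l) - min (p : ℕ) (m + l)) = m + (p : ℕ) - l := by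
          omega
        have h3 : n - 1 - (m + l) = m - 1 - l := by omega
        rw [h2, h3]
      rw [Finset.sum_congr rfl hterm]
      have hrefl := Finset.sum_range_reflect (fun k => γ ((p : ℕ) + 1 + k) * xi k) m
      have hrw : ∀ l ∈ Finset.range m,
          γ (m + (p : ℕ) - l) * xi (m - 1 - l)
            = (fun k => γ ((p : ℕ) + 1 + k) * xi k) (m - 1 - l) := by
        intro l hl
        rw [Finset.mem_range] at hl
        simp only []
        have : (p : ℕ) + 1 + (m - 1 - l) = m + (p : ℕ) - l := by omega
        rw [this]
      rw [Finset.sum_congr rfl hrw, hrefl]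
      have := hγ_star (p : ℕ) hp
      have hstar : ∑ k ∈ Finset.range m, γ ((p : ℕ) + 1 + k) * xi k = xi p := by
        rw [← this]
        apply Finset.sum_congr rfl
        intro k _
        have : (p : ℕ) + 1 + k = (p : ℕ) + k + 1 := by omega
        rw [this]
      rw [hstar]
      simp only [hvdef]
      rw [if_pos hp]
    · -- second block: zero
      have hz : ∀ l ∈ Finset.range m, g (m + l) = 0 := by
        intro l hl
        rw [Finset.mem_range] at hl
        simp only [hgdef]
        rw [hγ_zero _ (by omega), zero_mul]
      rw [Finset.sum_eq_zero hz, add_zero]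
      have hterm : ∀ q ∈ Finset.range m, g q
          = γ ((2 * m - 1 - (p : ℕ)) + q + 1) * xi q := by
        intro q hq
        rw [Finset.mem_range] at hq
        simp only [hgdef]
        rw [if_pos hq]
        have h2 : n - (max (p : ℕ) q - min (p : ℕ) q) = (2 * m - 1 - (p : ℕ)) + q + 1 := by
          omega
        rw [h2]
      rw [Finset.sum_congr rfl hterm, hγ_star (2 * m - 1 - (p : ℕ)) (by omega)]
      simp only [hvdef]
      rw [if_neg (by omega)]
  exact opNorm_eq_one_of_pos_eigenvector hn (toeplitz n γ) hnnM hsymM v hv heig
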